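/- If (sigma, tau) is a good pair of permutations of {1,...,n} with disjoint ascent sets A(sigma) ∩ A(tau) = ∅, then (w_0 sigma w_0, w_0 tau w_0) is a good pair with disjoint ascent sets as well. -/

import Mathlib

open Finset

/-- The `j`-th entry of the Lehmer code of `w`: the number of `k > j` with `w k < w j`. -/
def LC {n : ℕ} (w : Equiv.Perm (Fin n)) (j : Fin n) : ℕ :=
  (Finset.univ.filter (fun k => j < k ∧ w k < w j)).card

/-- `L'_j(w) = L_j(w⁻¹)`. -/
def LC' {n : ℕ} (w : Equiv.Perm (Fin n)) (j : Fin n) : ℕ := LC w⁻¹ j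

/-- The longest permutation `w₀` (zero-based: `i ↦ i.rev = n - 1 - i`). -/
def w0 {n : ℕ} : Equiv.Perm (Fin n) := ⟨Fin.rev, Fin.rev, Fin.rev_rev, Fin.rev_rev⟩

/-- `(σ, τ)` is a good pair: `L_j(σ) ≥ L_j(τ)` and `L'_{σ(j)}(σ) ≥ L'_{τ(j)}(τ)` for all `j`. -/
def GoodPair {n : ℕ} (σ τ : Equiv.Perm (Fin n)) : Prop :=
  ∀ j : Fin n, LC τ j ≤ LC σ j ∧ LC' τ (τ j) ≤ LC' σ (σ j)

/-- The ascent set of a permutation of `Fin (n+1)`: those `i` with `w i < w (i+1)`. -/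
def Asc {n : ℕ} (w : Equiv.Perm (Fin (n + 1))) : Finset (Fin n) :=
  Finset.univ.filter (fun i => w i.castSucc < w i.succ)

lemma w0_apply {n : ℕ} (j : Fin n) : (w0 : Equiv.Perm (Fin n)) j = j.rev := rfl

lemma w0_inv {n : ℕ} : (w0 : Equiv.Perm (Fin n))⁻¹ = w0 := by
  ext j; rfl

/-- Key identity: `L_j(w₀ w w₀) = L'_{w(rev j)}(w)`, i.e. the number of `k < rev j`
with `w k > w (rev j)`. -/
lemma LC_conj {n : ℕ} (w : Equiv.Perm (Fin n)) (j : Fin n) :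
    LC (w0 * w * w0) j = LC w⁻¹ (w j.rev) := by
  unfold LC
  refine Finset.card_equiv (Fin.revPerm.trans (w : Equiv.Perm (Fin n))) (fun k => ?_)
  simp only [Finset.mem_filter, Finset.mem_univ, true_and]
  simp only [Finset.mem_filter, Finset.mem_univ, true_and, Equiv.Perm.mul_apply, w0_apply,
    Equiv.trans_apply, Fin.revPerm_apply, Equiv.Perm.coe_inv, Equiv.symm_apply_apply]
  rw [Fin.rev_lt_rev]
  constructor
  · rintro ⟨h1, h2⟩
    exact ⟨h2, Fin.rev_lt_rev.mpr h1⟩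
  · rintro ⟨h1, h2⟩
    exact ⟨Fin.rev_lt_rev.mp h2, h1⟩

lemma mem_Asc_conj {n : ℕ} (w : Equiv.Perm (Fin (n + 1))) (i : Fin n) :
    i ∈ Asc (w0 * w * w0) ↔ i.rev ∈ Asc w := by
  simp only [Asc, Finset.mem_filter, Finset.mem_univ, true_and, Equiv.Perm.mul_apply, w0_apply,
    Fin.rev_castSucc, Fin.rev_succ, Fin.rev_lt_rev]

theorem good_pair_disjoint_asc_conj_w0 {n : ℕ} (σ τ : Equiv.Perm (Fin (n + 1)))
    (hgp : GoodPair σ τ) (hasc : Asc σ ∩ Asc τ = ∅) :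
    GoodPair (w0 * σ * w0) (w0 * τ * w0) ∧ Asc (w0 * σ * w0) ∩ Asc (w0 * τ * w0) = ∅ := by
  have hconj_inv : ∀ w : Equiv.Perm (Fin (n + 1)), (w0 * w * w0)⁻¹ = w0 * w⁻¹ * w0 := by
    intro w
    rw [mul_inv_rev, mul_inv_rev, w0_inv, mul_assoc]
  have hLC' : ∀ (w : Equiv.Perm (Fin (n + 1))) (j : Fin (n + 1)),
      LC' (w0 * w * w0) ((w0 * w * w0 : Equiv.Perm (Fin (n + 1))) j) = LC w j.rev := by
    intro w j
    have : ((w0 * w * w0 : Equiv.Perm (Fin (n + 1))) j).rev = w j.rev := by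
      simp only [Equiv.Perm.mul_apply, w0_apply, Fin.rev_rev]
    rw [LC', hconj_inv, LC_conj, this, ← Equiv.Perm.mul_apply, inv_mul_cancel, Equiv.Perm.one_apply, inv_inv]
  constructor
  · intro j
    constructor
    · rw [LC_conj, LC_conj]
      exact (hgp j.rev).2
    · rw [hLC' σ j, hLC' τ j]
      exact (hgp j.rev).1
  · rw [Finset.eq_empty_iff_forall_notMem]
    intro i hi
    rw [Finset.mem_inter, mem_Asc_conj, mem_Asc_conj] at hi
    have : i.rev ∈ Asc σ ∩ Asc τ := Finset.mem_inter.mpr hi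
    rw [hasc] at this
    exact absurd this (Finset.notMem_empty _)
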